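/- For z ∈ (-1,1], define M(z), x̄(z) as the mass and centroid x-coordinate of the region of the unit disk with x ≤ z, and I(z) = ∫_{-1}^{z} ∫_{-√(1-x²)}^{√(1-x²)} (y² + (x - x̄(z))²) dy dx the moment of inertia about the centroid. Then I(z) + I(-z) ≥ 2·I(0) for all z ∈ (-1,1). -/

import Mathlib

open Real intervalIntegral Set

/-- Area of the portion of the unit disk with first coordinate at most `z`. -/
noncomputable def diskMass (z : ℝ) : ℝ := ∫ x in (-1 : ℝ)..z, 2 * Real.sqrt (1 - x ^ 2)

/-- `x`-coordinate of the centroid of the portion of the unit disk with `x ≤ z`. -/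
noncomputable def diskCentroid (z : ℝ) : ℝ :=
  (∫ x in (-1 : ℝ)..z, 2 * x * Real.sqrt (1 - x ^ 2)) / diskMass z

/-- Moment of inertia about its centroid of the portion of the unit disk with `x ≤ z`. -/
noncomputable def diskInertia (z : ℝ) : ℝ :=
  ∫ x in (-1 : ℝ)..z, ∫ y in (-Real.sqrt (1 - x ^ 2))..Real.sqrt (1 - x ^ 2),
    (y ^ 2 + (x - diskCentroid z) ^ 2)

noncomputable def diskF (x : ℝ) : ℝ := x * Real.sqrt (1 - x ^ 2) + Real.arcsin x

lemma sqrt_one_sub_sq_cont : Continuous (fun x : ℝ => Real.sqrt (1 - x ^ 2)) := by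
  continuity

lemma hasDerivAt_diskF {x : ℝ} (hx : x ∈ Set.Ioo (-1:ℝ) 1) :
    HasDerivAt diskF (2 * Real.sqrt (1 - x ^ 2)) x := by
  obtain ⟨h1, h2⟩ := hx
  have hx2 : (0:ℝ) < 1 - x ^ 2 := by nlinarith
  have hs : Real.sqrt (1 - x ^ 2) ≠ 0 := by positivity
  have hsq : Real.sqrt (1 - x ^ 2) ^ 2 = 1 - x ^ 2 := Real.sq_sqrt hx2.le
  have d1 : HasDerivAt (fun x : ℝ => 1 - x ^ 2) (-(2 * x)) x := by
    simpa using ((hasDerivAt_pow 2 x).const_sub 1)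
  have d2 : HasDerivAt (fun x : ℝ => Real.sqrt (1 - x ^ 2))
      (-(2 * x) / (2 * Real.sqrt (1 - x ^ 2))) x := by
    simpa [div_eq_mul_inv, mul_comm, Function.comp_def] using (Real.hasDerivAt_sqrt hx2.ne').comp x d1
  have d3 : HasDerivAt (fun x : ℝ => x * Real.sqrt (1 - x ^ 2))
      (1 * Real.sqrt (1 - x ^ 2) + x * (-(2 * x) / (2 * Real.sqrt (1 - x ^ 2)))) x :=
    (hasDerivAt_id x).mul d2
  have d4 := d3.add (Real.hasDerivAt_arcsin (by linarith) (by linarith))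
  refine HasDerivAt.congr_deriv d4 (Eq.symm ?_)
  field_simp
  linear_combination hsq

lemma diskMass_eq {z : ℝ} (h1 : -1 ≤ z) (h2 : z ≤ 1) :
    diskMass z = diskF z + π / 2 := by
  have hcont : ContinuousOn diskF (Icc (-1) z) := by
    apply Continuous.continuousOn
    exact ((continuous_id.mul sqrt_one_sub_sq_cont).add Real.continuous_arcsin)
  have hint : IntervalIntegrable (fun x : ℝ => 2 * Real.sqrt (1 - x ^ 2))
      MeasureTheory.volume (-1) z :=
    (continuous_const.mul sqrt_one_sub_sq_cont).intervalIntegrable _ _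
  have := integral_eq_sub_of_hasDerivAt_of_le h1 hcont
    (fun x hx => hasDerivAt_diskF ⟨hx.1, lt_of_lt_of_le hx.2 h2⟩) hint
  rw [diskMass, this]
  simp [diskF, Real.arcsin_neg, Real.arcsin_one]

noncomputable def diskS (z : ℝ) : ℝ := ∫ x in (-1:ℝ)..z, 2 * x * Real.sqrt (1 - x ^ 2)

lemma diskS_eq {z : ℝ} (h1 : -1 ≤ z) (h2 : z ≤ 1) :
    diskS z = -(2/3) * Real.sqrt (1 - z ^ 2) ^ 3 := by
  have hcont : ContinuousOn (fun x : ℝ => -(2/3) * Real.sqrt (1 - x ^ 2) ^ 3) (Icc (-1) z) :=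
    (continuous_const.mul (sqrt_one_sub_sq_cont.pow 3)).continuousOn
  have hint : IntervalIntegrable (fun x : ℝ => 2 * x * Real.sqrt (1 - x ^ 2))
      MeasureTheory.volume (-1) z :=
    ((continuous_const.mul continuous_id).mul sqrt_one_sub_sq_cont).intervalIntegrable _ _
  have key : ∀ x ∈ Ioo (-1:ℝ) z, HasDerivAt (fun x : ℝ => -(2/3) * Real.sqrt (1 - x ^ 2) ^ 3)
      (2 * x * Real.sqrt (1 - x ^ 2)) x := by
    intro x hx
    have hx1 : -1 < x := hx.1
    have hx2' : x < 1 := lt_of_lt_of_le hx.2 h2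
    have hx2 : (0:ℝ) < 1 - x ^ 2 := by nlinarith
    have hs : Real.sqrt (1 - x ^ 2) ≠ 0 := by positivity
    have hsq : Real.sqrt (1 - x ^ 2) ^ 2 = 1 - x ^ 2 := Real.sq_sqrt hx2.le
    have d1 : HasDerivAt (fun x : ℝ => 1 - x ^ 2) (-(2 * x)) x := by
      simpa using ((hasDerivAt_pow 2 x).const_sub 1)
    have d2 : HasDerivAt (fun x : ℝ => Real.sqrt (1 - x ^ 2))
        (-(2 * x) / (2 * Real.sqrt (1 - x ^ 2))) x := by
      simpa [div_eq_mul_inv, mul_comm, Function.comp_def] using (Real.hasDerivAt_sqrt hx2.ne').comp x d1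
    have d3 := ((d2.pow 3).const_mul (-(2/3) : ℝ))
    refine HasDerivAt.congr_deriv d3 (Eq.symm ?_)
    field_simp
    linear_combination (0:ℝ) * hsq
  have := integral_eq_sub_of_hasDerivAt_of_le h1 hcont key hint
  rw [diskS, this]
  norm_num

noncomputable def diskJ (z : ℝ) : ℝ := ∫ x in (-1:ℝ)..z, (2/3) * Real.sqrt (1 - x ^ 2) ^ 3
noncomputable def diskK (z : ℝ) : ℝ := ∫ x in (-1:ℝ)..z, 2 * x ^ 2 * Real.sqrt (1 - x ^ 2)

lemma inner_int (s c : ℝ) :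
    (∫ y in (-s)..s, (y ^ 2 + c ^ 2)) = (2/3) * s ^ 3 + 2 * s * c ^ 2 := by
  rw [integral_add ((continuous_pow 2).intervalIntegrable _ _) (intervalIntegrable_const),
    integral_pow, integral_const]
  simp
  ring

lemma diskInertia_eq {z : ℝ} (hM : diskMass z ≠ 0) :
    diskInertia z = diskJ z + diskK z - diskS z ^ 2 / diskMass z := by
  set c := diskCentroid z with hc
  have h1 : diskInertia z = ∫ x in (-1:ℝ)..z,
      ((2/3) * Real.sqrt (1 - x ^ 2) ^ 3 + 2 * x ^ 2 * Real.sqrt (1 - x ^ 2)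
        - 2 * c * (2 * x * Real.sqrt (1 - x ^ 2)) + c ^ 2 * (2 * Real.sqrt (1 - x ^ 2))) := by
    rw [diskInertia]
    apply intervalIntegral.integral_congr
    intro x _
    simp only
    rw [inner_int (Real.sqrt (1 - x ^ 2)) (x - c)]
    ring
  have i1 : IntervalIntegrable (fun x : ℝ => (2/3) * Real.sqrt (1 - x ^ 2) ^ 3)
      MeasureTheory.volume (-1) z :=
    (continuous_const.mul (sqrt_one_sub_sq_cont.pow 3)).intervalIntegrable _ _
  have i2 : IntervalIntegrable (fun x : ℝ => 2 * x ^ 2 * Real.sqrt (1 - x ^ 2))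
      MeasureTheory.volume (-1) z :=
    ((continuous_const.mul (continuous_pow 2)).mul sqrt_one_sub_sq_cont).intervalIntegrable _ _
  have i3 : IntervalIntegrable (fun x : ℝ => 2 * c * (2 * x * Real.sqrt (1 - x ^ 2)))
      MeasureTheory.volume (-1) z :=
    (continuous_const.mul ((continuous_const.mul continuous_id).mul
      sqrt_one_sub_sq_cont)).intervalIntegrable _ _
  have i4 : IntervalIntegrable (fun x : ℝ => c ^ 2 * (2 * Real.sqrt (1 - x ^ 2)))
      MeasureTheory.volume (-1) z :=
    (continuous_const.mul (continuous_const.mul sqrt_one_sub_sq_cont)).intervalIntegrable _ _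
  rw [h1]
  rw [integral_add (((i1.add i2).sub i3)) i4, integral_sub (i1.add i2) i3, integral_add i1 i2]
  have e3 : (∫ x in (-1:ℝ)..z, 2 * c * (2 * x * Real.sqrt (1 - x ^ 2))) = 2 * c * diskS z := by
    rw [integral_const_mul]; rfl
  have e4 : (∫ x in (-1:ℝ)..z, c ^ 2 * (2 * Real.sqrt (1 - x ^ 2))) = c ^ 2 * diskMass z := by
    rw [integral_const_mul]; rfl
  have eJ : (∫ x in (-1:ℝ)..z, (2/3) * Real.sqrt (1 - x ^ 2) ^ 3) = diskJ z := rfl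
  have eK : (∫ x in (-1:ℝ)..z, 2 * x ^ 2 * Real.sqrt (1 - x ^ 2)) = diskK z := rfl
  rw [e3, e4, eJ, eK]
  have hcv : c = diskS z / diskMass z := rfl
  rw [hcv]
  field_simp
  ring

lemma even_sum {f : ℝ → ℝ} (hc : Continuous f) (hf : ∀ x, f (-x) = f x) (z : ℝ) :
    (∫ x in (-1:ℝ)..z, f x) + (∫ x in (-1:ℝ)..(-z), f x)
      = 2 * ∫ x in (-1:ℝ)..(0:ℝ), f x := by
  have i0 : ∀ a b : ℝ, IntervalIntegrable f MeasureTheory.volume a b :=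
    fun a b => hc.intervalIntegrable a b
  have h1 : (∫ x in (-1:ℝ)..(0:ℝ), f x) + (∫ x in (0:ℝ)..z, f x) = ∫ x in (-1:ℝ)..z, f x :=
    integral_add_adjacent_intervals (i0 _ _) (i0 _ _)
  have h2 : (∫ x in (-1:ℝ)..(0:ℝ), f x) + (∫ x in (0:ℝ)..(-z), f x) = ∫ x in (-1:ℝ)..(-z), f x :=
    integral_add_adjacent_intervals (i0 _ _) (i0 _ _)
  have h3 : (∫ x in (0:ℝ)..(-z), f x) = - ∫ x in (0:ℝ)..z, f x := by
    have : (∫ x in (0:ℝ)..(-z), f x) = ∫ x in (0:ℝ)..(-z), f (-x) := by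
      simp [hf]
    rw [this, intervalIntegral.integral_comp_neg f, neg_neg, neg_zero,
      intervalIntegral.integral_symm]
  linarith

lemma diskMass_pos {z : ℝ} (h1 : -1 < z) (h2 : z ≤ 1) : 0 < diskMass z := by
  apply intervalIntegral_pos_of_pos_on
    ((continuous_const.mul sqrt_one_sub_sq_cont).intervalIntegrable _ _)
  · intro x hx
    have : (0:ℝ) < 1 - x ^ 2 := by nlinarith [hx.1, hx.2]
    exact mul_pos two_pos (Real.sqrt_pos.2 this)
  · exact h1

lemma diskF_odd (z : ℝ) : diskF (-z) = - diskF z := by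
  simp [diskF, Real.arcsin_neg]
  ring

lemma diskF_le {z : ℝ} (h0 : 0 ≤ z) (h1 : z ≤ 1) : diskF z ≤ 2 * z - z ^ 3 / 3 := by
  have hM0 : diskMass 0 = π / 2 := by
    rw [diskMass_eq (by norm_num) (by norm_num)]
    simp [diskF]
  have hMz : diskMass z = diskF z + π / 2 := diskMass_eq (by linarith) h1
  have i0 : ∀ (f : ℝ → ℝ), Continuous f →
      ∀ a b : ℝ, IntervalIntegrable f MeasureTheory.volume a b :=
    fun f hf a b => hf.intervalIntegrable a b
  have hadj : diskMass 0 + (∫ x in (0:ℝ)..z, 2 * Real.sqrt (1 - x ^ 2)) = diskMass z :=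
    integral_add_adjacent_intervals
      ((continuous_const.mul sqrt_one_sub_sq_cont).intervalIntegrable _ _)
      ((continuous_const.mul sqrt_one_sub_sq_cont).intervalIntegrable _ _)
  have hmono : (∫ x in (0:ℝ)..z, 2 * Real.sqrt (1 - x ^ 2))
      ≤ ∫ x in (0:ℝ)..z, (2 - x ^ 2) := by
    apply integral_mono_on h0
      ((continuous_const.mul sqrt_one_sub_sq_cont).intervalIntegrable _ _)
      ((continuous_const.sub (continuous_pow 2)).intervalIntegrable _ _)
    intro x hx
    have hx0 := hx.1
    have hx1 : x ≤ 1 := le_trans hx.2 h1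
    have key : Real.sqrt (1 - x ^ 2) ≤ 1 - x ^ 2 / 2 := by
      have h2 : (1 - x ^ 2 : ℝ) ≤ (1 - x ^ 2 / 2) ^ 2 := by nlinarith
      calc Real.sqrt (1 - x ^ 2) ≤ Real.sqrt ((1 - x ^ 2 / 2) ^ 2) := Real.sqrt_le_sqrt h2
        _ = 1 - x ^ 2 / 2 := Real.sqrt_sq (by nlinarith)
    show 2 * Real.sqrt (1 - x ^ 2) ≤ 2 - x ^ 2
    linarith
  have hval : (∫ x in (0:ℝ)..z, (2 - x ^ 2)) = 2 * z - z ^ 3 / 3 := by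
    rw [integral_sub (intervalIntegrable_const) ((continuous_pow 2).intervalIntegrable _ _),
      integral_const, integral_pow]
    norm_num
    ring
  nlinarith [hmono, hval, hadj, hM0, hMz]

lemma diskF_le' {z : ℝ} (h0 : 0 ≤ z) (h1 : z ≤ 1) :
    (4/3) * Real.sqrt (1 - z) ^ 3 ≤ π / 2 - diskF z := by
  have hM1 : diskMass 1 = π := by
    rw [diskMass_eq (by norm_num) (by norm_num)]
    simp [diskF, Real.arcsin_one]
  have hMz : diskMass z = diskF z + π / 2 := diskMass_eq (by linarith) h1
  have hadj : diskMass z + (∫ x in z..(1:ℝ), 2 * Real.sqrt (1 - x ^ 2)) = diskMass 1 :=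
    integral_add_adjacent_intervals
      ((continuous_const.mul sqrt_one_sub_sq_cont).intervalIntegrable _ _)
      ((continuous_const.mul sqrt_one_sub_sq_cont).intervalIntegrable _ _)
  have hmono : (∫ x in z..(1:ℝ), 2 * Real.sqrt (1 - x))
      ≤ ∫ x in z..(1:ℝ), 2 * Real.sqrt (1 - x ^ 2) := by
    apply integral_mono_on h1
      ((continuous_const.mul (by continuity)).intervalIntegrable _ _)
      ((continuous_const.mul sqrt_one_sub_sq_cont).intervalIntegrable _ _)
    intro x hx
    have hx0 : 0 ≤ x := le_trans h0 hx.1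
    have hx1 : x ≤ 1 := hx.2
    have : (1 - x : ℝ) ≤ 1 - x ^ 2 := by nlinarith
    have := Real.sqrt_le_sqrt this
    show 2 * Real.sqrt (1 - x) ≤ 2 * Real.sqrt (1 - x ^ 2)
    linarith
  have hval : (∫ x in z..(1:ℝ), 2 * Real.sqrt (1 - x)) = (4/3) * Real.sqrt (1 - z) ^ 3 := by
    have hcont : ContinuousOn (fun x : ℝ => -(4/3) * Real.sqrt (1 - x) ^ 3) (Icc z 1) := by
      apply Continuous.continuousOn
      exact continuous_const.mul ((by continuity : Continuous fun x : ℝ =>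
        Real.sqrt (1 - x)).pow 3)
    have key : ∀ x ∈ Ioo z 1, HasDerivAt (fun x : ℝ => -(4/3) * Real.sqrt (1 - x) ^ 3)
        (2 * Real.sqrt (1 - x)) x := by
      intro x hx
      have hx2 : (0:ℝ) < 1 - x := by linarith [hx.2]
      have hs : Real.sqrt (1 - x) ≠ 0 := by positivity
      have hsq : Real.sqrt (1 - x) ^ 2 = 1 - x := Real.sq_sqrt hx2.le
      have d1 : HasDerivAt (fun x : ℝ => 1 - x) (-1) x := by
        simpa using (hasDerivAt_id x).const_sub 1
      have d2 : HasDerivAt (fun x : ℝ => Real.sqrt (1 - x)) (-1 / (2 * Real.sqrt (1 - x))) x := by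
        simpa [div_eq_mul_inv, mul_comm, Function.comp_def] using (Real.hasDerivAt_sqrt hx2.ne').comp x d1
      have d3 := (d2.pow 3).const_mul (-(4/3) : ℝ)
      refine HasDerivAt.congr_deriv d3 (Eq.symm ?_)
      field_simp
      linear_combination (0:ℝ) * hsq
    have := integral_eq_sub_of_hasDerivAt_of_le h1 hcont key
      ((continuous_const.mul (by continuity : Continuous fun x : ℝ =>
        Real.sqrt (1 - x))).intervalIntegrable _ _)
    rw [this]
    simp
  nlinarith [hmono, hval, hadj, hM1, hMz]

lemma diskF_nonneg {z : ℝ} (h0 : 0 ≤ z) (h1 : z ≤ 1) : 0 ≤ diskF z :=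
  add_nonneg (mul_nonneg h0 (Real.sqrt_nonneg _)) (Real.arcsin_nonneg.2 h0)

set_option maxHeartbeats 1000000 in
lemma core {z : ℝ} (h0 : 0 ≤ z) (h1 : z ≤ 1) :
    diskF z ^ 2 + π ^ 2 / 4 * (1 - z ^ 2) ^ 3 ≤ π ^ 2 / 4 := by
  have ht0 : 0 ≤ diskF z := diskF_nonneg h0 h1
  have hp2 : (9.8696:ℝ) ≤ π ^ 2 := by nlinarith [Real.pi_gt_d6]
  by_cases hz : z ≤ 0.85
  · have hA := diskF_le h0 h1
    have h2 : diskF z ^ 2 ≤ (2 * z - z ^ 3 / 3) ^ 2 := by nlinarith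
    have hu : z ^ 2 ≤ 0.7225 := by nlinarith
    have hq : (2 - z ^ 2 / 3) ^ 2 ≤ π ^ 2 / 4 * (3 - 3 * z ^ 2 + z ^ 4) := by
      nlinarith [hp2, hu, sq_nonneg (z ^ 2 - 0.7225), sq_nonneg z,
        mul_nonneg (sub_nonneg.2 hu) (sub_nonneg.2 hp2),
        mul_nonneg (sub_nonneg.2 hp2) (sq_nonneg (z ^ 2 - 0.7225))]
    have h3 : z ^ 2 * (2 - z ^ 2 / 3) ^ 2 ≤ z ^ 2 * (π ^ 2 / 4 * (3 - 3 * z ^ 2 + z ^ 4)) :=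
      mul_le_mul_of_nonneg_left hq (sq_nonneg z)
    nlinarith [h2, h3]
  · push_neg at hz
    set s := Real.sqrt (1 - z) with hs
    have hs0 : 0 ≤ s := Real.sqrt_nonneg _
    have hs2 : s ^ 2 = 1 - z := Real.sq_sqrt (by linarith)
    have hs39 : s ≤ 0.39 := by
      rw [hs, show (0.39:ℝ) = Real.sqrt (0.39 ^ 2) by rw [Real.sqrt_sq]; norm_num]
      exact Real.sqrt_le_sqrt (by nlinarith)
    set c := (4/3) * s ^ 3 with hc
    have hc0 : 0 ≤ c := by positivity
    have hC := diskF_le' h0 h1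
    have hπ : π < 3.15 := Real.pi_lt_d2
    have hπ' : 3.141592 < π := Real.pi_gt_d6
    have h2 : diskF z ^ 2 ≤ (π / 2 - c) ^ 2 := by nlinarith
    have ht : s ^ 3 ≤ 0.06 := by
      have := pow_le_pow_left₀ hs0 hs39 3
      nlinarith [this]
    have ht0' : (0:ℝ) ≤ s ^ 3 := by positivity
    have h8 : (1 + z) ^ 3 ≤ 8 := by
      have := pow_le_pow_left₀ (by linarith : (0:ℝ) ≤ 1 + z) (by linarith : 1 + z ≤ 2) 3
      nlinarith [this]
    have hcD : π / 2 * (1 - z ^ 2) ^ 3 ≤ c := by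
      have hz2 : (1 - z ^ 2) = s ^ 2 * (1 + z) := by linear_combination (-(1 + z)) * hs2
      have e : (1 - z ^ 2) ^ 3 = (s ^ 3) ^ 2 * (1 + z) ^ 3 := by rw [hz2]; ring
      rw [e, hc]
      have step1 : π / 2 * ((s ^ 3) ^ 2 * (1 + z) ^ 3) ≤ π / 2 * (s ^ 3) ^ 2 * 8 := by
        nlinarith [mul_le_mul_of_nonneg_left h8 (show (0:ℝ) ≤ π / 2 * (s ^ 3) ^ 2 by positivity)]
      have step3 : π / 2 * (s ^ 3) ^ 2 * 8 ≤ 12.6 * (s ^ 3) ^ 2 := by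
        nlinarith [sq_nonneg (s ^ 3), hπ]
      have step4 : 12.6 * (s ^ 3) ^ 2 ≤ 12.6 * (0.06 * s ^ 3) := by
        nlinarith [mul_le_mul_of_nonneg_left ht ht0']
      nlinarith [step1, step3, step4, ht0']
    have hcπ : c ≤ π / 2 := by rw [hc]; linarith
    have k1 : π ^ 2 / 4 * (1 - z ^ 2) ^ 3 ≤ π / 2 * c := by
      have : π ^ 2 / 4 * (1 - z ^ 2) ^ 3 = π / 2 * (π / 2 * (1 - z ^ 2) ^ 3) := by ring
      rw [this]
      exact mul_le_mul_of_nonneg_left hcD (by positivity)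
    nlinarith [h2, k1, mul_le_mul_of_nonneg_left hcπ hc0]

/-- The total moment of inertia of the two pieces of the unit disk cut by the
vertical line `x = z` is minimized at `z = 0`. -/
theorem diskInertia_add_ge (z : ℝ) (hz : z ∈ Set.Ioo (-1 : ℝ) 1) :
    2 * diskInertia 0 ≤ diskInertia z + diskInertia (-z) := by
  obtain ⟨hz1, hz2⟩ := hz
  have hm1 : 0 < diskMass z := diskMass_pos hz1 hz2.le
  have hm2 : 0 < diskMass (-z) := diskMass_pos (by linarith) (by linarith)
  have hm0 : 0 < diskMass 0 := diskMass_pos (by norm_num) (by norm_num)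
  rw [diskInertia_eq hm1.ne', diskInertia_eq hm2.ne', diskInertia_eq hm0.ne']
  have hJ : diskJ z + diskJ (-z) = 2 * diskJ 0 :=
    even_sum (continuous_const.mul (sqrt_one_sub_sq_cont.pow 3))
      (fun x => by simp [neg_sq]) z
  have hK : diskK z + diskK (-z) = 2 * diskK 0 :=
    even_sum ((continuous_const.mul (continuous_pow 2)).mul sqrt_one_sub_sq_cont)
      (fun x => by simp [neg_sq]) z
  have hM0 : diskMass 0 = π / 2 := by
    rw [diskMass_eq (by norm_num) (by norm_num)]; simp [diskF]
  have hS0 : diskS 0 = -(2/3) := by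
    rw [diskS_eq (by norm_num) (by norm_num)]; simp
  have hMz : diskMass z = π / 2 + diskF z := by
    rw [diskMass_eq hz1.le hz2.le]; ring
  have hMz' : diskMass (-z) = π / 2 - diskF z := by
    rw [diskMass_eq (by linarith) (by linarith), diskF_odd]; ring
  have hSz : diskS z ^ 2 = 4/9 * (1 - z ^ 2) ^ 3 := by
    rw [diskS_eq hz1.le hz2.le]
    have : Real.sqrt (1 - z ^ 2) ^ 2 = 1 - z ^ 2 := Real.sq_sqrt (by nlinarith)
    linear_combination (4/9 * (Real.sqrt (1 - z ^ 2) ^ 4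
      + Real.sqrt (1 - z ^ 2) ^ 2 * (1 - z ^ 2) + (1 - z ^ 2) ^ 2)) * this
  have hSz' : diskS (-z) ^ 2 = 4/9 * (1 - z ^ 2) ^ 3 := by
    rw [diskS_eq (by linarith) (by linarith)]
    have : Real.sqrt (1 - (-z) ^ 2) ^ 2 = 1 - (-z) ^ 2 := Real.sq_sqrt (by nlinarith)
    linear_combination (4/9 * (Real.sqrt (1 - (-z) ^ 2) ^ 4
      + Real.sqrt (1 - (-z) ^ 2) ^ 2 * (1 - z ^ 2) + (1 - z ^ 2) ^ 2)) * this
  have hcore : diskF z ^ 2 + π ^ 2 / 4 * (1 - z ^ 2) ^ 3 ≤ π ^ 2 / 4 := by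
    rcases le_or_gt 0 z with h | h
    · exact core h hz2.le
    · have := core (by linarith : (0:ℝ) ≤ -z) (by linarith)
      rw [diskF_odd] at this
      simpa [neg_sq] using this
  have key : diskS z ^ 2 / diskMass z + diskS (-z) ^ 2 / diskMass (-z)
      ≤ 2 * (diskS 0 ^ 2 / diskMass 0) := by
    rw [hSz, hSz', hMz, hMz', hS0, hM0]
    have hp1 : (0:ℝ) < π / 2 + diskF z := by rw [← hMz]; exact hm1
    have hp2 : (0:ℝ) < π / 2 - diskF z := by rw [← hMz']; exact hm2
    rw [div_add_div _ _ hp1.ne' hp2.ne', div_le_iff₀ (by positivity)]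
    have hπ : (0:ℝ) < π := Real.pi_pos
    have e : 2 * ((-(2/3)) ^ 2 / (π / 2)) = 16 / (9 * π) := by
      field_simp; ring
    rw [e, show (16:ℝ)/(9*π) * ((π/2 + diskF z)*(π/2 - diskF z))
      = 16*((π/2 + diskF z)*(π/2 - diskF z))/(9*π) by ring,
      le_div_iff₀ (by positivity : (0:ℝ) < 9 * π)]
    nlinarith [hcore]
  linarith [hJ, hK, key]
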